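/- Let X be a Banach space complemented in its bidual via an L-projection P : X'' → X (i.e., X'' = X ⊕₁ X_s with X_s = ker P). If (x_n) is a bounded sequence in X spanning l^1 asymptotically isometrically with inf ‖x_n‖ > 0, then every weak* accumulation point of {x_n} in X'' lies in X_s. -/

import Mathlib

open Filter Topology Finset

section HB
variable {X : Type*} [NormedAddCommGroup X] [NormedSpace ℝ X]

/-- Hahn–Banach construction: a norm-one functional nearly norming a tail of `y`
while taking a controlled value at `v`. -/
lemma hb_aux (y : ℕ → X) (v : X) (N : ℕ) (ε γ β : ℝ) (hγ : 0 < γ)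
    (hlow : ∀ (m : ℕ) (α : ℕ → ℝ), (∀ n, 0 ≤ α n) → (∀ n, n < N → α n = 0) →
        (1 - 2*ε) * (∑ n ∈ Finset.range m, α n) ≤ ‖∑ n ∈ Finset.range m, α n • y n‖)
    (hβ : ∀ (m : ℕ) (α : ℕ → ℝ), (∀ n, 0 ≤ α n) → (∀ n, n < N → α n = 0) →
        (1 - 2*ε) * (∑ n ∈ Finset.range m, α n)
          - ‖(∑ n ∈ Finset.range m, α n • y n) - v‖ ≤ β) :
    ∃ f : StrongDual ℝ X, ‖f‖ ≤ 1 ∧ (∀ n, N ≤ n → 1 - 2*ε ≤ f (y n)) ∧ f v ≤ β + γ := by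
  classical
  -- the defining set of the sublinear functional
  set S : X → Set ℝ := fun x => {q | ∃ (m : ℕ) (α : ℕ → ℝ) (t : ℝ),
      (∀ n, 0 ≤ α n) ∧ (∀ n, n < N → α n = 0) ∧ (∀ n, m ≤ n → α n = 0) ∧ 0 ≤ t ∧
      q = ‖x + (∑ n ∈ Finset.range m, α n • y n) - t • v‖ + t*(β+γ)
          - (1 - 2*ε) * ∑ n ∈ Finset.range m, α n} with hS
  have hmemnorm : ∀ x : X, ‖x‖ ∈ S x := by
    intro x
    refine ⟨0, 0, 0, fun n => le_rfl, fun n _ => rfl, fun n _ => rfl, le_rfl, ?_⟩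
    simp
  have hnonempty : ∀ x : X, (S x).Nonempty := fun x => ⟨‖x‖, hmemnorm x⟩
  -- lower bound for members of S x
  have hlb : ∀ x : X, ∀ q ∈ S x, -‖x‖ ≤ q := by
    rintro x q ⟨m, α, t, hα0, hαN, hαm, ht, rfl⟩
    have key : (1 - 2*ε) * (∑ n ∈ Finset.range m, α n) - t * β
        ≤ ‖(∑ n ∈ Finset.range m, α n • y n) - t • v‖ := by
      rcases eq_or_lt_of_le ht with h0 | hpos
      · rw [← h0]; simpa using hlow m α hα0 hαN
      · have h1 := hβ m (fun n => t⁻¹ * α n)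
          (fun n => mul_nonneg (inv_nonneg.2 hpos.le) (hα0 n))
          (fun n hn => by simp [hαN n hn])
        have hsum : ∑ n ∈ Finset.range m, t⁻¹ * α n
            = t⁻¹ * ∑ n ∈ Finset.range m, α n := by rw [Finset.mul_sum]
        have hsmul : ∑ n ∈ Finset.range m, (t⁻¹ * α n) • y n
            = t⁻¹ • ∑ n ∈ Finset.range m, α n • y n := by
          rw [Finset.smul_sum]; exact Finset.sum_congr rfl fun n _ => by rw [smul_smul]
        simp only [hsum, hsmul] at h1
        have hnorm : ‖t⁻¹ • (∑ n ∈ Finset.range m, α n • y n) - v‖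
            = t⁻¹ * ‖(∑ n ∈ Finset.range m, α n • y n) - t • v‖ := by
          rw [show t⁻¹ • (∑ n ∈ Finset.range m, α n • y n) - v
              = t⁻¹ • ((∑ n ∈ Finset.range m, α n • y n) - t • v) by
            rw [smul_sub, smul_smul, inv_mul_cancel₀ (ne_of_gt hpos), one_smul]]
          rw [norm_smul, Real.norm_eq_abs, abs_of_pos (inv_pos.2 hpos)]
        rw [hnorm] at h1
        have h3 := mul_le_mul_of_nonneg_left h1 ht
        have heq : t * ((1 - 2*ε) * (t⁻¹ * ∑ n ∈ Finset.range m, α n)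
            - t⁻¹ * ‖(∑ n ∈ Finset.range m, α n • y n) - t • v‖)
            = (1 - 2*ε) * (∑ n ∈ Finset.range m, α n)
              - ‖(∑ n ∈ Finset.range m, α n • y n) - t • v‖ := by
          field_simp
        rw [heq] at h3
        linarith
    have hre : x + (∑ n ∈ Finset.range m, α n • y n) - t • v
        = x + ((∑ n ∈ Finset.range m, α n • y n) - t • v) := by abel
    have htri : ‖(∑ n ∈ Finset.range m, α n • y n) - t • v‖ - ‖x‖
        ≤ ‖x + ((∑ n ∈ Finset.range m, α n • y n) - t • v)‖ := by
      have h4 := norm_add_le (-x) (x + ((∑ n ∈ Finset.range m, α n • y n) - t • v))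
      simp only [neg_add_cancel_left, norm_neg] at h4
      linarith
    rw [hre]
    nlinarith [mul_nonneg ht (le_of_lt hγ)]
  have hbdd : ∀ x : X, BddBelow (S x) := fun x => ⟨-‖x‖, fun q hq => hlb x q hq⟩
  set p : X → ℝ := fun x => sInf (S x) with hp
  have hp_le_norm : ∀ x, p x ≤ ‖x‖ := fun x => csInf_le (hbdd x) (hmemnorm x)
  have hp_ge : ∀ x, -‖x‖ ≤ p x := fun x => le_csInf (hnonempty x) (hlb x)
  -- p is subadditive
  have hp_add : ∀ x₁ x₂, p (x₁ + x₂) ≤ p x₁ + p x₂ := by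
    intro x₁ x₂
    have step : ∀ q₁ ∈ S x₁, ∀ q₂ ∈ S x₂, p (x₁ + x₂) ≤ q₁ + q₂ := by
      rintro q₁ ⟨m₁, α₁, t₁, h₁0, h₁N, h₁m, ht₁, rfl⟩ q₂ ⟨m₂, α₂, t₂, h₂0, h₂N, h₂m, ht₂, rfl⟩
      set M := max m₁ m₂ with hM
      have hext : ∀ (m : ℕ) (α : ℕ → ℝ), (∀ n, m ≤ n → α n = 0) → m ≤ M →
          (∑ n ∈ Finset.range M, α n • y n = ∑ n ∈ Finset.range m, α n • y n)
          ∧ (∑ n ∈ Finset.range M, α n = ∑ n ∈ Finset.range m, α n) := by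
        intro m α hm hmM
        constructor
        · exact (Finset.sum_subset (Finset.range_subset_range.2 hmM) (fun i _ hi => by
            rw [hm i (le_of_not_gt (fun h => hi (Finset.mem_range.2 h))), zero_smul])).symm
        · exact (Finset.sum_subset (Finset.range_subset_range.2 hmM) (fun i _ hi => by
            rw [hm i (le_of_not_gt (fun h => hi (Finset.mem_range.2 h)))])).symm
      obtain ⟨he₁, hs₁⟩ := hext m₁ α₁ h₁m (le_max_left _ _)
      obtain ⟨he₂, hs₂⟩ := hext m₂ α₂ h₂m (le_max_right _ _)
      have hmem : ‖x₁ + x₂ + (∑ n ∈ Finset.range M, (α₁ + α₂) n • y n) - (t₁ + t₂) • v‖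
          + (t₁+t₂)*(β+γ) - (1 - 2*ε) * ∑ n ∈ Finset.range M, (α₁ + α₂) n ∈ S (x₁ + x₂) := by
        exact ⟨M, α₁ + α₂, t₁ + t₂, fun n => add_nonneg (h₁0 n) (h₂0 n),
          fun n hn => by simp [h₁N n hn, h₂N n hn],
          fun n hn => by
            simp [h₁m n (le_trans (le_max_left _ _) hn), h₂m n (le_trans (le_max_right _ _) hn)],
          add_nonneg ht₁ ht₂, rfl⟩
      refine le_trans (csInf_le (hbdd _) hmem) ?_
      have hsplit : ∑ n ∈ Finset.range M, (α₁ + α₂) n • y n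
          = (∑ n ∈ Finset.range m₁, α₁ n • y n) + ∑ n ∈ Finset.range m₂, α₂ n • y n := by
        rw [← he₁, ← he₂, ← Finset.sum_add_distrib]
        exact Finset.sum_congr rfl fun n _ => by simp [add_smul]
      have hssum : ∑ n ∈ Finset.range M, (α₁ + α₂) n
          = (∑ n ∈ Finset.range m₁, α₁ n) + ∑ n ∈ Finset.range m₂, α₂ n := by
        rw [← hs₁, ← hs₂, ← Finset.sum_add_distrib]; rfl
      rw [hsplit, hssum]
      have htri : ‖x₁ + x₂ + ((∑ n ∈ Finset.range m₁, α₁ n • y n)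
            + ∑ n ∈ Finset.range m₂, α₂ n • y n) - (t₁ + t₂) • v‖
          ≤ ‖x₁ + (∑ n ∈ Finset.range m₁, α₁ n • y n) - t₁ • v‖
            + ‖x₂ + (∑ n ∈ Finset.range m₂, α₂ n • y n) - t₂ • v‖ := by
        have : x₁ + x₂ + ((∑ n ∈ Finset.range m₁, α₁ n • y n)
            + ∑ n ∈ Finset.range m₂, α₂ n • y n) - (t₁ + t₂) • v
          = (x₁ + (∑ n ∈ Finset.range m₁, α₁ n • y n) - t₁ • v)
            + (x₂ + (∑ n ∈ Finset.range m₂, α₂ n • y n) - t₂ • v) := by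
          rw [add_smul]; abel
        rw [this]; exact norm_add_le _ _
      nlinarith [htri]
    have h1 : ∀ q₁ ∈ S x₁, p (x₁ + x₂) - q₁ ≤ p x₂ := by
      intro q₁ hq₁
      exact le_csInf (hnonempty x₂) (fun q₂ hq₂ => by linarith [step q₁ hq₁ q₂ hq₂])
    have h2 : p (x₁ + x₂) - p x₂ ≤ p x₁ :=
      le_csInf (hnonempty x₁) (fun q₁ hq₁ => by linarith [h1 q₁ hq₁])
    linarith
  -- p is positively homogeneous
  have hp_smul_le : ∀ c : ℝ, 0 < c → ∀ x, p (c • x) ≤ c * p x := by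
    intro c hc x
    have step : ∀ q ∈ S x, p (c • x) ≤ c * q := by
      rintro q ⟨m, α, t, hα0, hαN, hαm, ht, rfl⟩
      have hmem : ‖c • x + (∑ n ∈ Finset.range m, (fun n => c * α n) n • y n) - (c*t) • v‖
          + (c*t)*(β+γ) - (1 - 2*ε) * ∑ n ∈ Finset.range m, (fun n => c * α n) n
          ∈ S (c • x) :=
        ⟨m, fun n => c * α n, c * t, fun n => mul_nonneg hc.le (hα0 n),
          fun n hn => by simp [hαN n hn], fun n hn => by simp [hαm n hn],
          mul_nonneg hc.le ht, rfl⟩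
      refine le_trans (csInf_le (hbdd _) hmem) ?_
      have h₁ : ∑ n ∈ Finset.range m, (fun n => c * α n) n • y n
          = c • ∑ n ∈ Finset.range m, α n • y n := by
        rw [Finset.smul_sum]; exact Finset.sum_congr rfl fun n _ => by simp [smul_smul]
      have h₂ : ∑ n ∈ Finset.range m, (fun n => c * α n) n
          = c * ∑ n ∈ Finset.range m, α n := by rw [Finset.mul_sum]
      rw [h₁, h₂]
      have h₃ : ‖c • x + c • (∑ n ∈ Finset.range m, α n • y n) - (c*t) • v‖
          = c * ‖x + (∑ n ∈ Finset.range m, α n • y n) - t • v‖ := by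
        rw [show c • x + c • (∑ n ∈ Finset.range m, α n • y n) - (c*t) • v
            = c • (x + (∑ n ∈ Finset.range m, α n • y n) - t • v) by
          rw [smul_sub, smul_add, smul_smul]]
        rw [norm_smul, Real.norm_eq_abs, abs_of_pos hc]
      rw [h₃]; ring_nf; rfl
    have : ∀ q ∈ S x, c⁻¹ * p (c • x) ≤ q := by
      intro q hq
      have := step q hq
      calc c⁻¹ * p (c • x) ≤ c⁻¹ * (c * q) := by
            exact mul_le_mul_of_nonneg_left this (inv_pos.2 hc).le
        _ = q := by field_simp
    have h4 : c⁻¹ * p (c • x) ≤ p x := le_csInf (hnonempty x) this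
    calc p (c • x) = c * (c⁻¹ * p (c • x)) := by field_simp
      _ ≤ c * p x := mul_le_mul_of_nonneg_left h4 hc.le
  have hp_smul : ∀ c : ℝ, 0 < c → ∀ x, p (c • x) = c * p x := by
    intro c hc x
    refine le_antisymm (hp_smul_le c hc x) ?_
    have := hp_smul_le c⁻¹ (inv_pos.2 hc) (c • x)
    rw [smul_smul, inv_mul_cancel₀ (ne_of_gt hc), one_smul] at this
    calc c * p x ≤ c * (c⁻¹ * p (c • x)) := mul_le_mul_of_nonneg_left this hc.le
      _ = p (c • x) := by field_simp
  -- Hahn–Banach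
  obtain ⟨g, -, hg⟩ := exists_extension_of_le_sublinear ⟨⊥, 0⟩ p hp_smul hp_add
    (fun x => by
      obtain ⟨x, hx⟩ := x
      simp only [Submodule.mem_bot] at hx
      subst hx
      simpa using hp_ge 0)
  have hgnorm : ∀ x, |g x| ≤ ‖x‖ := by
    intro x
    rw [abs_le]
    constructor
    · have := le_trans (hg (-x)) (hp_le_norm (-x))
      rw [map_neg, norm_neg] at this; linarith
    · exact le_trans (hg x) (hp_le_norm x)
  refine ⟨LinearMap.mkContinuous g 1 (fun x => by simpa using hgnorm x), ?_, ?_, ?_⟩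
  · exact LinearMap.mkContinuous_norm_le g zero_le_one _
  · intro n hn
    have hmem : ‖-(y n) + (∑ k ∈ Finset.range (n+1),
        (fun k => if k = n then (1:ℝ) else 0) k • y k) - (0:ℝ) • v‖
        + (0:ℝ)*(β+γ) - (1 - 2*ε) * ∑ k ∈ Finset.range (n+1),
          (fun k => if k = n then (1:ℝ) else 0) k ∈ S (-(y n)) := by
      refine ⟨n+1, fun k => if k = n then (1:ℝ) else 0, 0,
        fun k => by positivity,
        fun k hk => by
          simp only [ite_eq_right_iff]
          intro hkn; omega,
        fun k hk => by
          simp only [ite_eq_right_iff]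
          intro hkn; omega,
        le_rfl, rfl⟩
    have hsum1 : ∑ k ∈ Finset.range (n+1), (fun k => if k = n then (1:ℝ) else 0) k • y k
        = y n := by
      rw [Finset.sum_eq_single n (fun b _ hb => by simp [hb]) (fun h => by
        exact absurd (Finset.self_mem_range_succ n) h)]
      simp
    have hsum2 : ∑ k ∈ Finset.range (n+1), (fun k => if k = n then (1:ℝ) else 0) k = 1 := by
      rw [Finset.sum_eq_single n (fun b _ hb => by simp [hb]) (fun h => by
        exact absurd (Finset.self_mem_range_succ n) h)]
      simp
    have := le_trans (hg (-(y n))) (csInf_le (hbdd _) hmem)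
    rw [hsum1, hsum2] at this
    simp only [zero_smul, sub_zero, neg_add_cancel, norm_zero, zero_mul, zero_add, mul_one,
      map_neg] at this
    have happ : (LinearMap.mkContinuous g 1 (fun x => by simpa using hgnorm x)) (y n)
        = g (y n) := rfl
    rw [happ]; linarith
  · have hmem : ‖v + (∑ n ∈ Finset.range 0, (0:ℕ → ℝ) n • y n) - (1:ℝ) • v‖
        + (1:ℝ)*(β+γ) - (1 - 2*ε) * ∑ n ∈ Finset.range 0, (0:ℕ → ℝ) n ∈ S v :=
      ⟨0, 0, 1, fun n => le_rfl, fun n _ => rfl, fun n _ => rfl, zero_le_one, rfl⟩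
    have := le_trans (hg v) (csInf_le (hbdd _) hmem)
    simp only [Finset.range_zero, Finset.sum_empty, add_zero, one_smul, sub_self,
      norm_zero, one_mul, zero_add, mul_zero, sub_zero] at this
    exact this

end HB

lemma arith1 {σ A β d ε : ℝ} (h9 : (1-ε)*σ - d ≤ A) (hblt : β - ε^2 < (1-2*ε)*σ - A)
    (hβlb : d - 2*ε - ε^2 ≤ β) (hσnn : 0 ≤ σ) (hε : 0 < ε) (hε2 : ε ≤ 1/2) :
    σ ≤ 3 ∧ A ≤ σ - d + 2*ε + 2*ε^2 := by
  constructor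
  · nlinarith
  · nlinarith

lemma arith2 {σ₁ σ₂ d ε : ℝ} (h : (1-ε)*(σ₁+σ₂) ≤ σ₁ + σ₂ - 2*d + 4*ε + 4*ε^2)
    (h1 : σ₁ ≤ 3) (h2 : σ₂ ≤ 3) (h1n : 0 ≤ σ₁) (h2n : 0 ≤ σ₂)
    (hε : 0 < ε) (hε2 : ε ≤ 1/2) : d ≤ 6*ε := by nlinarith

open Filter Topology
noncomputable section
/-- A sequence `x` of nonzero elements spans `ℓ¹` asymptotically isometrically. -/
def SpansL1Asy {X : Type*} [NormedAddCommGroup X] [NormedSpace ℝ X] (x : ℕ → X) : Prop :=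
  ∃ δ : ℕ → ℝ, (∀ n, δ n ∈ Set.Ico (0 : ℝ) 1) ∧ Tendsto δ atTop (𝓝 0) ∧
    ∀ (m : ℕ) (α : ℕ → ℝ),
      (∑ n ∈ Finset.range m, (1 - δ n) * |α n|) ≤
          ‖∑ n ∈ Finset.range m, α n • (‖x n‖⁻¹ • x n)‖ ∧
        ‖∑ n ∈ Finset.range m, α n • (‖x n‖⁻¹ • x n)‖ ≤ ∑ n ∈ Finset.range m, |α n|
set_option maxHeartbeats 2000000 in
/-- In an L-embedded space, every weak* accumulation point of a bounded sequence
spanning ℓ¹ asymptotically isometrically (bounded away from 0) lies in the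
singular part Xₛ = ker P. -/
theorem asyL1_weakStar_accumulation_in_singular {X : Type*} [NormedAddCommGroup X]
    [NormedSpace ℝ X] [CompleteSpace X]
    (P : StrongDual ℝ (StrongDual ℝ X) →L[ℝ]
        StrongDual ℝ (StrongDual ℝ X))
    (hidem : ∀ z, P (P z) = P z)
    (hL : ∀ z, ‖z‖ = ‖P z‖ + ‖z - P z‖)
    (hrange : Set.range ⇑P = Set.range ⇑(NormedSpace.inclusionInDoubleDual ℝ X))
    (x : ℕ → X) (hbdd : ∃ M, ∀ n, ‖x n‖ ≤ M)
    (hx : SpansL1Asy x) (hinf : ∃ c > 0, ∀ n, c ≤ ‖x n‖)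
    (z : StrongDual ℝ (StrongDual ℝ X))
    (hz : MapClusterPt (StrongDual.toWeakDual z) atTop
      (fun n => StrongDual.toWeakDual (NormedSpace.inclusionInDoubleDual ℝ X (x n)))) :
    P z = 0 := by
  classical
  obtain ⟨δ, hδ01, hδ0, hineq⟩ := hx
  obtain ⟨M, hM⟩ := hbdd
  obtain ⟨c, hc, hcle⟩ := hinf
  set ι := NormedSpace.inclusionInDoubleDual ℝ X with hι
  set y : ℕ → X := fun n => ‖x n‖⁻¹ • x n with hy
  have hyeq : ∀ n, ‖x n‖⁻¹ • x n = y n := fun _ => rfl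
  simp only [hyeq] at hineq
  have hxn0 : ∀ n, ‖x n‖ ≠ 0 := fun n => by
    have := hcle n; intro h; rw [h] at this; linarith
  have hynorm : ∀ n, ‖y n‖ = 1 := fun n => by
    rw [hy]
    simp only [norm_smul, norm_inv, norm_norm]
    exact inv_mul_cancel₀ (hxn0 n)
  -- the filter along which everything converges
  set u : ℕ → WeakDual ℝ (StrongDual ℝ X) :=
    fun n => StrongDual.toWeakDual (ι (x n)) with hu
  have h1 : (𝓝 (StrongDual.toWeakDual z) ⊓ map u atTop).NeBot := hz
  have hF0 : (atTop ⊓ comap u (𝓝 (StrongDual.toWeakDual z))).NeBot := by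
    rw [← Filter.map_neBot_iff u, Filter.push_pull]
    rw [inf_comm] at h1
    exact h1
  set F0 := atTop ⊓ comap u (𝓝 (StrongDual.toWeakDual z)) with hF0def
  set ν : ℕ → ℝ := fun n => ‖x n‖ with hν
  have hsub : map ν F0 ≤ 𝓟 (Set.Icc c M) := by
    rw [Filter.le_principal_iff]
    rw [Filter.mem_map]
    exact Filter.univ_mem' (fun n => ⟨hcle n, hM n⟩)
  haveI := hF0
  obtain ⟨r, hrIcc, hrcl⟩ := isCompact_Icc.exists_clusterPt hsub
  have hr0 : 0 < r := lt_of_lt_of_le hc hrIcc.1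
  have hF : (F0 ⊓ comap ν (𝓝 r)).NeBot := by
    rw [← Filter.map_neBot_iff ν, Filter.push_pull]
    have : (𝓝 r ⊓ map ν F0).NeBot := hrcl
    rw [inf_comm] at this
    exact this
  set F := F0 ⊓ comap ν (𝓝 r) with hFdef
  haveI := hF
  have hFtop : F ≤ atTop := le_trans inf_le_left inf_le_left
  have hνr : Tendsto ν F (𝓝 r) := Filter.tendsto_iff_comap.mpr inf_le_right
  have hzf : ∀ f : StrongDual ℝ X, Tendsto (fun n => f (x n)) F (𝓝 (z f)) := by
    intro f
    have h2 : Tendsto u F (𝓝 (StrongDual.toWeakDual z)) :=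
      Filter.tendsto_iff_comap.mpr (le_trans inf_le_left inf_le_right)
    exact ((WeakDual.eval_continuous f).tendsto _).comp h2
  have hyf : ∀ f : StrongDual ℝ X,
      Tendsto (fun n => f (y n)) F (𝓝 (r⁻¹ * z f)) := by
    intro f
    have h3 : Tendsto (fun n => (ν n)⁻¹ * f (x n)) F (𝓝 (r⁻¹ * z f)) :=
      (hνr.inv₀ hr0.ne').mul (hzf f)
    refine h3.congr (fun n => ?_)
    rw [hy]
    simp [map_smul, hν]
  set w : StrongDual ℝ (StrongDual ℝ X) := r⁻¹ • z with hw
  have hwap : ∀ f, w f = r⁻¹ * z f := fun f => rfl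
  have hw1 : ‖w‖ ≤ 1 := by
    refine ContinuousLinearMap.opNorm_le_bound w zero_le_one (fun f => ?_)
    rw [one_mul, hwap f]
    have h4 : Tendsto (fun n => ‖f (y n)‖) F (𝓝 ‖r⁻¹ * z f‖) := (hyf f).norm
    refine le_of_tendsto h4 (Filter.Eventually.of_forall (fun n => ?_))
    calc ‖f (y n)‖ ≤ ‖f‖ * ‖y n‖ := f.le_opNorm (y n)
      _ = ‖f‖ := by rw [hynorm n, mul_one]
  obtain ⟨v, hv⟩ : P w ∈ Set.range ⇑ι := by
    rw [← hrange]; exact ⟨w, rfl⟩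
  have hdv : ‖P w‖ = ‖v‖ := by
    rw [← hv]
    exact (NormedSpace.inclusionInDoubleDualLi ℝ (E := X)).norm_map v
  have hds : ‖v‖ + ‖w - P w‖ ≤ 1 := by
    have := hL w
    rw [hdv] at this
    linarith
  -- the key tail estimate
  have key : ∀ ε : ℝ, 0 < ε → ε ≤ 1/2 → ∀ N : ℕ, (∀ n, N ≤ n → δ n ≤ ε) →
      ∃ m, ∃ μ : ℕ → ℝ, (∀ n, 0 ≤ μ n) ∧ (∀ n, n < N → μ n = 0) ∧ (∀ n, m ≤ n → μ n = 0) ∧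
        (∑ n ∈ Finset.range m, μ n) ≤ 3 ∧
        ‖(∑ n ∈ Finset.range m, μ n • y n) - v‖
          ≤ (∑ n ∈ Finset.range m, μ n) - ‖v‖ + 2*ε + 2*ε^2 := by
    intro ε hε hε2 N hN
    have hlow : ∀ (m : ℕ) (α : ℕ → ℝ), (∀ n, 0 ≤ α n) → (∀ n, n < N → α n = 0) →
        (1 - ε) * (∑ n ∈ Finset.range m, α n) ≤ ‖∑ n ∈ Finset.range m, α n • y n‖ := by
      intro m α hα0 hαN
      have h5 : ∀ n ∈ Finset.range m, (1 - ε) * α n ≤ (1 - δ n) * |α n| := by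
        intro n _
        rcases eq_or_ne (α n) 0 with h | h
        · rw [h]; simp
        · have hn : N ≤ n := by
            by_contra hlt
            exact h (hαN n (not_le.mp hlt))
          rw [abs_of_nonneg (hα0 n)]
          have h6 := hN n hn
          exact mul_le_mul_of_nonneg_right (by linarith) (hα0 n)
      calc (1 - ε) * (∑ n ∈ Finset.range m, α n)
          = ∑ n ∈ Finset.range m, (1 - ε) * α n := by rw [Finset.mul_sum]
        _ ≤ ∑ n ∈ Finset.range m, (1 - δ n) * |α n| := Finset.sum_le_sum h5
        _ ≤ ‖∑ n ∈ Finset.range m, α n • y n‖ := (hineq m α).1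
    have hσ0 : ∀ (m : ℕ) (α : ℕ → ℝ), (∀ n, 0 ≤ α n) →
        (0:ℝ) ≤ ∑ n ∈ Finset.range m, α n :=
      fun m α hα0 => Finset.sum_nonneg (fun n _ => hα0 n)
    have hlow2 : ∀ (m : ℕ) (α : ℕ → ℝ), (∀ n, 0 ≤ α n) → (∀ n, n < N → α n = 0) →
        (1 - 2*ε) * (∑ n ∈ Finset.range m, α n) ≤ ‖∑ n ∈ Finset.range m, α n • y n‖ := by
      intro m α hα0 hαN
      refine le_trans ?_ (hlow m α hα0 hαN)
      exact mul_le_mul_of_nonneg_right (by linarith) (hσ0 m α hα0)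
    set Bset : Set ℝ := {b | ∃ m, ∃ μ : ℕ → ℝ, (∀ n, 0 ≤ μ n) ∧ (∀ n, n < N → μ n = 0)
        ∧ (∀ n, m ≤ n → μ n = 0)
        ∧ b = (1 - 2*ε) * (∑ n ∈ Finset.range m, μ n)
            - ‖(∑ n ∈ Finset.range m, μ n • y n) - v‖} with hBset
    have hBne : Bset.Nonempty := by
      refine ⟨(1 - 2*ε) * (∑ n ∈ Finset.range 0, (0:ℕ → ℝ) n)
          - ‖(∑ n ∈ Finset.range 0, (0:ℕ → ℝ) n • y n) - v‖,
        0, 0, fun n => le_rfl, fun n _ => rfl, fun n _ => rfl, rfl⟩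
    have hBbdd : BddAbove Bset := by
      refine ⟨‖v‖, fun b hb => ?_⟩
      obtain ⟨m, μ, hμ0, hμN, hμm, rfl⟩ := hb
      have h6 := hlow2 m μ hμ0 hμN
      have h7 : ‖∑ n ∈ Finset.range m, μ n • y n‖ - ‖v‖
          ≤ ‖(∑ n ∈ Finset.range m, μ n • y n) - v‖ := norm_sub_norm_le _ _
      linarith
    set β := sSup Bset with hβdef
    have hβusable : ∀ (m : ℕ) (α : ℕ → ℝ), (∀ n, 0 ≤ α n) → (∀ n, n < N → α n = 0) →
        (1 - 2*ε) * (∑ n ∈ Finset.range m, α n)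
          - ‖(∑ n ∈ Finset.range m, α n • y n) - v‖ ≤ β := by
      intro m α hα0 hαN
      have hmem : (1 - 2*ε) * (∑ n ∈ Finset.range m, α n)
          - ‖(∑ n ∈ Finset.range m, α n • y n) - v‖ ∈ Bset := by
        refine ⟨m, fun n => if n < m then α n else 0,
          fun n => by dsimp only; split <;> simp [hα0 n],
          fun n hn => by dsimp only; split <;> simp [hαN n hn],
          fun n hn => by simp [Nat.not_lt.mpr hn], ?_⟩
        have e1 : ∑ n ∈ Finset.range m, (if n < m then α n else 0) = ∑ n ∈ Finset.range m, α n :=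
          Finset.sum_congr rfl (fun n hn => by rw [if_pos (Finset.mem_range.mp hn)])
        have e2 : ∑ n ∈ Finset.range m, (if n < m then α n else 0) • y n
            = ∑ n ∈ Finset.range m, α n • y n :=
          Finset.sum_congr rfl (fun n hn => by rw [if_pos (Finset.mem_range.mp hn)])
        rw [e1, e2]
      exact le_csSup hBbdd hmem
    obtain ⟨f, hf1, hf2, hf3⟩ := hb_aux y v N ε (ε^2) β (by positivity) hlow2 hβusable
    -- evaluate the cluster point against f
    have hge : 1 - 2*ε ≤ w f := by
      rw [hwap f]
      refine ge_of_tendsto (hyf f) ?_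
      filter_upwards [hFtop (eventually_ge_atTop N)] with n hn
      exact hf2 n hn
    have hwsf : w f - f v ≤ ‖w - P w‖ := by
      have h8 : (w - P w) f = w f - f v := by
        rw [ContinuousLinearMap.sub_apply, ← hv]
        rfl
      calc w f - f v = (w - P w) f := h8.symm
        _ ≤ ‖(w - P w) f‖ := le_abs_self _
        _ ≤ ‖w - P w‖ * ‖f‖ := (w - P w).le_opNorm f
        _ ≤ ‖w - P w‖ * 1 := mul_le_mul_of_nonneg_left hf1 (norm_nonneg (w - P w))
        _ = ‖w - P w‖ := mul_one _
    have hβlb : ‖v‖ - 2*ε - ε^2 ≤ β := by linarith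
    obtain ⟨b, hbmem, hblt⟩ := exists_lt_of_lt_csSup hBne
      (show β - ε^2 < sSup Bset from hβdef ▸ sub_lt_self β (by positivity))
    obtain ⟨m, μ, hμ0, hμN, hμm, rfl⟩ := hbmem
    set σ := ∑ n ∈ Finset.range m, μ n with hσdef
    have hσnn : (0:ℝ) ≤ σ := hσ0 m μ hμ0
    have h9 : ‖(∑ n ∈ Finset.range m, μ n • y n) - v‖ ≥ (1-ε) * σ - ‖v‖ := by
      have := hlow m μ hμ0 hμN
      have h7 : ‖∑ n ∈ Finset.range m, μ n • y n‖ - ‖v‖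
          ≤ ‖(∑ n ∈ Finset.range m, μ n • y n) - v‖ := norm_sub_norm_le _ _
      linarith
    have hA1 : (1-ε) * σ - ‖v‖ ≤ ‖(∑ n ∈ Finset.range m, μ n • y n) - v‖ := by linarith [h9]
    have hB1 : ‖v‖ - 2*ε - ε^2 ≤ β := by linarith [hβlb]
    obtain ⟨hσ3, hAv⟩ := arith1 hA1 hblt hB1 hσnn hε hε2
    exact ⟨m, μ, hμ0, hμN, hμm, hσ3, hAv⟩
  -- conclude ‖v‖ ≤ 6 ε for every small ε
  have hd6 : ∀ ε : ℝ, 0 < ε → ε ≤ 1/2 → ‖v‖ ≤ 6 * ε := by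
    intro ε hε hε2
    obtain ⟨N₀, hN₀⟩ : ∃ N₀ : ℕ, ∀ n, N₀ ≤ n → δ n ≤ ε := by
      have h10 : ∀ᶠ n in atTop, δ n < ε := hδ0.eventually_lt_const hε
      obtain ⟨N₀, hN₀⟩ := Filter.eventually_atTop.mp h10
      exact ⟨N₀, fun n hn => (hN₀ n hn).le⟩
    obtain ⟨m₁, μ₁, h₁0, h₁N, h₁m, h₁σ, h₁v⟩ := key ε hε hε2 N₀ hN₀
    obtain ⟨m₂, μ₂, h₂0, h₂N, h₂m, h₂σ, h₂v⟩ := key ε hε hε2 (max N₀ m₁)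
      (fun n hn => hN₀ n (le_trans (le_max_left _ _) hn))
    set Mm := max m₁ m₂ with hMm
    have hext : ∀ (m : ℕ) (μ : ℕ → ℝ), (∀ n, m ≤ n → μ n = 0) → m ≤ Mm →
        (∑ n ∈ Finset.range Mm, μ n • y n = ∑ n ∈ Finset.range m, μ n • y n)
        ∧ (∑ n ∈ Finset.range Mm, μ n = ∑ n ∈ Finset.range m, μ n) := by
      intro m μ hm hmM
      constructor
      · exact (Finset.sum_subset (Finset.range_subset_range.2 hmM) (fun i _ hi => by
          rw [hm i (le_of_not_gt (fun h => hi (Finset.mem_range.2 h))), zero_smul])).symm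
      · exact (Finset.sum_subset (Finset.range_subset_range.2 hmM) (fun i _ hi => by
          rw [hm i (le_of_not_gt (fun h => hi (Finset.mem_range.2 h)))])).symm
    obtain ⟨he₁, hs₁⟩ := hext m₁ μ₁ h₁m (le_max_left _ _)
    obtain ⟨he₂, hs₂⟩ := hext m₂ μ₂ h₂m (le_max_right _ _)
    -- the ℓ¹ lower bound for the difference
    have hterm : ∀ n ∈ Finset.range Mm,
        (1-ε) * (μ₁ n + μ₂ n) ≤ (1 - δ n) * |μ₁ n - μ₂ n| := by
      intro n _
      rcases eq_or_ne (μ₁ n + μ₂ n) 0 with h | h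
      · have e1 : μ₁ n = 0 := by linarith [h₁0 n, h₂0 n]
        have e2 : μ₂ n = 0 := by linarith [h₁0 n, h₂0 n]
        rw [e1, e2]; simp
      · have hn : N₀ ≤ n := by
          by_contra hlt
          push_neg at hlt
          rw [h₁N n hlt, h₂N n (lt_of_lt_of_le hlt (le_max_left _ _))] at h
          simp at h
        have hdisj : |μ₁ n - μ₂ n| = μ₁ n + μ₂ n := by
          rcases lt_or_ge n m₁ with hlt | hge
          · rw [h₂N n (lt_of_lt_of_le hlt (le_max_right N₀ m₁)), sub_zero, add_zero,
              abs_of_nonneg (h₁0 n)]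
          · rw [h₁m n hge, zero_sub, abs_neg, abs_of_nonneg (h₂0 n), zero_add]
        rw [hdisj]
        have hδn := hN₀ n hn
        exact mul_le_mul_of_nonneg_right (by linarith) (add_nonneg (h₁0 n) (h₂0 n))
    have hlower : (1-ε) * ((∑ n ∈ Finset.range m₁, μ₁ n) + ∑ n ∈ Finset.range m₂, μ₂ n)
        ≤ ∑ n ∈ Finset.range Mm, (1 - δ n) * |μ₁ n - μ₂ n| := by
      calc (1-ε) * ((∑ n ∈ Finset.range m₁, μ₁ n) + ∑ n ∈ Finset.range m₂, μ₂ n)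
          = ∑ n ∈ Finset.range Mm, (1-ε) * (μ₁ n + μ₂ n) := by
            rw [← hs₁, ← hs₂, ← Finset.sum_add_distrib, Finset.mul_sum]
        _ ≤ ∑ n ∈ Finset.range Mm, (1 - δ n) * |μ₁ n - μ₂ n| := Finset.sum_le_sum hterm
    have hupper := (hineq Mm (fun n => μ₁ n - μ₂ n)).1
    have hsplit : ∑ n ∈ Finset.range Mm, (μ₁ n - μ₂ n) • y n
        = (∑ n ∈ Finset.range m₁, μ₁ n • y n) - ∑ n ∈ Finset.range m₂, μ₂ n • y n := by
      rw [← he₁, ← he₂, ← Finset.sum_sub_distrib]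
      exact Finset.sum_congr rfl (fun n _ => by rw [sub_smul])
    rw [hsplit] at hupper
    have htri : ‖(∑ n ∈ Finset.range m₁, μ₁ n • y n) - ∑ n ∈ Finset.range m₂, μ₂ n • y n‖
        ≤ ‖(∑ n ∈ Finset.range m₁, μ₁ n • y n) - v‖
          + ‖(∑ n ∈ Finset.range m₂, μ₂ n • y n) - v‖ := by
      have e3 : (∑ n ∈ Finset.range m₁, μ₁ n • y n) - ∑ n ∈ Finset.range m₂, μ₂ n • y n
          = ((∑ n ∈ Finset.range m₁, μ₁ n • y n) - v)
            - ((∑ n ∈ Finset.range m₂, μ₂ n • y n) - v) := by abel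
      rw [e3]
      exact norm_sub_le _ _
    have hσ₁nn : (0:ℝ) ≤ ∑ n ∈ Finset.range m₁, μ₁ n :=
      Finset.sum_nonneg (fun n _ => h₁0 n)
    have hσ₂nn : (0:ℝ) ≤ ∑ n ∈ Finset.range m₂, μ₂ n :=
      Finset.sum_nonneg (fun n _ => h₂0 n)
    refine arith2 (σ₁ := ∑ n ∈ Finset.range m₁, μ₁ n) (σ₂ := ∑ n ∈ Finset.range m₂, μ₂ n)
      ?_ h₁σ h₂σ hσ₁nn hσ₂nn hε hε2
    calc (1-ε) * ((∑ n ∈ Finset.range m₁, μ₁ n) + ∑ n ∈ Finset.range m₂, μ₂ n)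
        ≤ ∑ n ∈ Finset.range Mm, (1 - δ n) * |μ₁ n - μ₂ n| := hlower
      _ ≤ ‖(∑ n ∈ Finset.range m₁, μ₁ n • y n) - ∑ n ∈ Finset.range m₂, μ₂ n • y n‖ := hupper
      _ ≤ ‖(∑ n ∈ Finset.range m₁, μ₁ n • y n) - v‖
          + ‖(∑ n ∈ Finset.range m₂, μ₂ n • y n) - v‖ := htri
      _ ≤ ((∑ n ∈ Finset.range m₁, μ₁ n) - ‖v‖ + 2*ε + 2*ε^2)
          + ((∑ n ∈ Finset.range m₂, μ₂ n) - ‖v‖ + 2*ε + 2*ε^2) := add_le_add h₁v h₂v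
      _ = (∑ n ∈ Finset.range m₁, μ₁ n) + (∑ n ∈ Finset.range m₂, μ₂ n)
          - 2*‖v‖ + 4*ε + 4*ε^2 := by ring
  -- finish
  have hv0 : ‖v‖ ≤ 0 := by
    by_contra h
    push_neg at h
    have hεpos : 0 < min (‖v‖/12) (1/2) := lt_min (by linarith) (by norm_num)
    have := hd6 (min (‖v‖/12) (1/2)) hεpos (min_le_right _ _)
    have h12 : 6 * min (‖v‖/12) (1/2) ≤ 6 * (‖v‖/12) :=
      mul_le_mul_of_nonneg_left (min_le_left _ _) (by norm_num)
    linarith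
  have hPw0 : P w = 0 := by
    have h13 : ‖P w‖ ≤ 0 := by rw [hdv]; exact hv0
    exact (ContinuousLinearMap.opNorm_zero_iff (P w)).mp (le_antisymm h13 (norm_nonneg _))
  have hzw : z = r • w := by
    rw [hw, smul_smul, mul_inv_cancel₀ hr0.ne', one_smul]
  rw [hzw, map_smul, hPw0, smul_zero]
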